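/- Let k > 0, χ > 0, and let p > 1 be a real number such that if χ² + χ(k-1) > 0 then p < k/(χ² + χ(k-1)). Then for every real r with r_-(p) < r < r_+(p) one has f(r; p, χ, k) = p[(p-1)χ + r + rk]²/(4(p-1)) - prχ - r(r+1)k < 0. -/

import Mathlib

/-- Let `k > 0`, `χ > 0`, and `p > 1` real such that if
`χ² + χ(k-1) > 0` then `p < k/(χ² + χ(k-1))`.  Then for every real `r` with
`r₋(p) < r < r₊(p)` one has
`f(r; p, χ, k) = p[(p-1)χ + r + rk]²/(4(p-1)) - prχ - r(r+1)k < 0`, where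
`r₊₋(p) = (p-1)·[(pχ(1-k)+2k)/(p(k-1)²+4k) ± 2√(k² - pχk(k-1) - pχ²k)/(p(k-1)²+4k)]`. -/
theorem stmt5 (k χ p : ℝ) (hk : 0 < k) (hχ : 0 < χ) (hp1 : 1 < p)
    (hp2 : χ ^ 2 + χ * (k - 1) > 0 → p < k / (χ ^ 2 + χ * (k - 1))) :
    ∀ r : ℝ,
      (p - 1) * ((p * χ * (1 - k) + 2 * k) / (p * (k - 1) ^ 2 + 4 * k) -
          2 * Real.sqrt (k ^ 2 - p * χ * k * (k - 1) - p * χ ^ 2 * k) /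
            (p * (k - 1) ^ 2 + 4 * k)) < r →
      r < (p - 1) * ((p * χ * (1 - k) + 2 * k) / (p * (k - 1) ^ 2 + 4 * k) +
          2 * Real.sqrt (k ^ 2 - p * χ * k * (k - 1) - p * χ ^ 2 * k) /
            (p * (k - 1) ^ 2 + 4 * k)) →
      p * ((p - 1) * χ + r + r * k) ^ 2 / (4 * (p - 1)) - p * r * χ - r * (r + 1) * k < 0 := by
  intro r h1 h2
  set Q := p * (k - 1) ^ 2 + 4 * k with hQdef
  set M := p * χ * (1 - k) + 2 * k with hMdef
  set D := k ^ 2 - p * χ * k * (k - 1) - p * χ ^ 2 * k with hDdef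
  have hQ : 0 < Q := by nlinarith [sq_nonneg (k - 1)]
  have hD : 0 < D := by
    rcases le_or_gt (χ ^ 2 + χ * (k - 1)) 0 with h | h
    · nlinarith [mul_nonneg (mul_pos (lt_trans one_pos hp1) hk).le (neg_nonneg.mpr h), pow_pos hk 2]
    · have := hp2 h
      rw [lt_div_iff₀ h] at this
      nlinarith
  set s := Real.sqrt D with hsdef
  have hs2 : s ^ 2 = D := Real.sq_sqrt hD.le
  have hQne : Q ≠ 0 := hQ.ne'
  have hlow : (p - 1) * (M - 2 * s) < Q * r := by
    have := mul_lt_mul_of_pos_left h1 hQ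
    calc (p - 1) * (M - 2 * s) = Q * ((p - 1) * (M / Q - 2 * s / Q)) := by
          field_simp
      _ < Q * r := this
  have hhigh : Q * r < (p - 1) * (M + 2 * s) := by
    have := mul_lt_mul_of_pos_left h2 hQ
    calc Q * r < Q * ((p - 1) * (M / Q + 2 * s / Q)) := this
      _ = (p - 1) * (M + 2 * s) := by field_simp
  have hprod : 0 < ((p - 1) * (M + 2 * s) - Q * r) * (Q * r - (p - 1) * (M - 2 * s)) :=
    mul_pos (by linarith) (by linarith)
  have key : Q * (p * ((p - 1) * χ + r + r * k) ^ 2 - 4 * (p - 1) * (p * r * χ + r * (r + 1) * k))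
      = -(((p - 1) * (M + 2 * s) - Q * r) * (Q * r - (p - 1) * (M - 2 * s)))
        + 4 * (p - 1) ^ 2 * (s ^ 2 - D) := by
    rw [hQdef, hMdef, hDdef]; ring
  have hpoly : p * ((p - 1) * χ + r + r * k) ^ 2 - 4 * (p - 1) * (p * r * χ + r * (r + 1) * k) < 0 := by
    have hQX : Q * (p * ((p - 1) * χ + r + r * k) ^ 2 - 4 * (p - 1) * (p * r * χ + r * (r + 1) * k)) < 0 := by
      rw [key, hs2]; linarith
    nlinarith [hQX, hQ]
  have h4 : (0:ℝ) < 4 * (p - 1) := by linarith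
  have hrw : p * ((p - 1) * χ + r + r * k) ^ 2 / (4 * (p - 1)) - p * r * χ - r * (r + 1) * k
      = (p * ((p - 1) * χ + r + r * k) ^ 2 - 4 * (p - 1) * (p * r * χ + r * (r + 1) * k)) / (4 * (p - 1)) := by
    have hp0 : p - 1 ≠ 0 := (sub_pos.mpr hp1).ne'
    field_simp
    ring
  rw [hrw]
  exact div_neg_of_neg_of_pos hpoly h4
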